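/- Let φ and ψ be GFG-QPTL formulas. Then: (i) there exists a hyperassignment 𝔄 with 𝔄 ⊨^{EA} φ if and only if there exists a hyperassignment 𝔅 with 𝔅 ⊨^{AE} φ; (ii) (for every hyperassignment 𝔄, 𝔄 ⊨^{EA} φ implies 𝔄 ⊨^{EA} ψ) if and only if (for every hyperassignment 𝔄, 𝔄 ⊨^{AE} φ implies 𝔄 ⊨^{AE} ψ); (iii) (for every hyperassignment 𝔄, 𝔄 ⊨^{EA} φ iff 𝔄 ⊨^{EA} ψ) if and only if (for every hyperassignment 𝔄, 𝔄 ⊨^{AE} φ iff 𝔄 ⊨^{AE} ψ). (Corollary 2, Interpretation Invariance.) -/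

import Mathlib

namespace GFG

/-- Temporal valuations. -/
abbrev Val : Type := ℕ → Bool

/-- Assignments over a type `AP` of atomic propositions. -/
abbrev Asg (AP : Type*) : Type _ := AP → Val

section Hyper

variable {X : Type*}

/-- A hyperassignment: a nonempty set of subsets not containing `∅`. -/
def IsHyp (𝔄 : Set (Set X)) : Prop := 𝔄 ≠ ∅ ∧ ∅ ∉ 𝔄

/-- A choice function for `𝔄`. -/
def IsChoice (𝔄 : Set (Set X)) (ϑ : Set X → X) : Prop := ∀ W ∈ 𝔄, ϑ W ∈ W

/-- The dual hyperassignment. -/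
def hdual (𝔄 : Set (Set X)) : Set (Set X) :=
  { Y | ∃ ϑ : Set X → X, IsChoice 𝔄 ϑ ∧ Y = ϑ '' 𝔄 }

/-- The preorder `⊑` on hyperassignments. -/
def hle (𝔄₁ 𝔄₂ : Set (Set X)) : Prop := ∀ W₁ ∈ 𝔄₁, ∃ W₂ ∈ 𝔄₂, W₂ ⊆ W₁

/-- The equivalence `≡` on hyperassignments. -/
def heqv (𝔄₁ 𝔄₂ : Set (Set X)) : Prop := hle 𝔄₁ 𝔄₂ ∧ hle 𝔄₂ 𝔄₁

/-- `par 𝔄`: partitions of `𝔄` into two disjoint parts. -/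
def par (𝔄 : Set (Set X)) : Set (Set (Set X) × Set (Set X)) :=
  { pr | pr.1 ∪ pr.2 = 𝔄 ∧ Disjoint pr.1 pr.2 }

end Hyper

variable {AP : Type*}

/-- `a₁ ≈_p^{>k} a₂`. -/
def ApproxGT (p : AP) (k : ℕ) (a₁ a₂ : Asg AP) : Prop :=
  (∀ q, q ≠ p → a₁ q = a₂ q) ∧ ∀ t ≤ k, a₁ p t = a₂ p t

/-- `a₁ ≈_p^{≥k} a₂`. -/
def ApproxGE (p : AP) (k : ℕ) (a₁ a₂ : Asg AP) : Prop :=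
  (∀ q, q ≠ p → a₁ q = a₂ q) ∧ ∀ t < k, a₁ p t = a₂ p t

/-- Quantifier specifications `ς = (B,S)`. -/
abbrev Spec (AP : Type*) := Set AP × Set AP

/-- A `ς`-functor. -/
def IsSpecFunctor (ς : Spec AP) (F : Asg AP → Val) : Prop :=
  (∀ (k : ℕ) (a₁ a₂ : Asg AP), (∃ p ∈ ς.1, ApproxGT p k a₁ a₂) → F a₁ k = F a₂ k) ∧
  (∀ (k : ℕ) (a₁ a₂ : Asg AP), (∃ p ∈ ς.2, ApproxGE p k a₁ a₂) → F a₁ k = F a₂ k)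

variable [DecidableEq AP]

/-- `ext(a,F,p)`. -/
def extAsg (a : Asg AP) (F : Asg AP → Val) (p : AP) : Asg AP :=
  Function.update a p (F a)

/-- `ext(W,F,p)`. -/
def extSet (W : Set (Asg AP)) (F : Asg AP → Val) (p : AP) : Set (Asg AP) :=
  (fun a => extAsg a F p) '' W

/-- `ext_ς(𝔄,p)`. -/
def extSpec (ς : Spec AP) (𝔄 : Set (Set (Asg AP))) (p : AP) : Set (Set (Asg AP)) :=
  { Y | ∃ W ∈ 𝔄, ∃ F : Asg AP → Val, IsSpecFunctor ς F ∧ Y = extSet W F p }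

/-- Alternation flags. -/
inductive Flag : Type
  | EA : Flag
  | AE : Flag
  deriving DecidableEq

/-- The dual flag. -/
def Flag.dual : Flag → Flag
  | .EA => .AE
  | .AE => .EA

/-- GFG-QPTL formulas (LTL formulas abstracted as arbitrary sets of assignments). -/
inductive Formula (AP : Type*) : Type _ where
  | atom : Set (Asg AP) → Formula AP
  | neg : Formula AP → Formula AP
  | conj : Formula AP → Formula AP → Formula AP
  | disj : Formula AP → Formula AP → Formula AP
  | ex : AP → Spec AP → Formula AP → Formula AP
  | all : AP → Spec AP → Formula AP → Formula AP

/-- The alternating Hodges semantics `𝔄 ⊨^α φ`. -/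
def Sat : Formula AP → Flag → Set (Set (Asg AP)) → Prop
  | .atom Ψ, .EA, 𝔄 => ∃ W ∈ 𝔄, W ⊆ Ψ
  | .atom Ψ, .AE, 𝔄 => ∀ W ∈ 𝔄, W ∩ Ψ ≠ ∅
  | .neg φ, α, 𝔄 => ¬ Sat φ α.dual 𝔄
  | .conj φ₁ φ₂, .EA, 𝔄 =>
      ∀ pr ∈ par 𝔄, (pr.1 ≠ ∅ ∧ Sat φ₁ .EA pr.1) ∨ (pr.2 ≠ ∅ ∧ Sat φ₂ .EA pr.2)
  | .conj φ₁ φ₂, .AE, 𝔄 =>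
      ∀ pr ∈ par (hdual 𝔄), (pr.1 ≠ ∅ ∧ Sat φ₁ .EA pr.1) ∨ (pr.2 ≠ ∅ ∧ Sat φ₂ .EA pr.2)
  | .disj φ₁ φ₂, .AE, 𝔄 =>
      ∃ pr ∈ par 𝔄, (pr.1 ≠ ∅ → Sat φ₁ .AE pr.1) ∧ (pr.2 ≠ ∅ → Sat φ₂ .AE pr.2)
  | .disj φ₁ φ₂, .EA, 𝔄 =>
      ∃ pr ∈ par (hdual 𝔄), (pr.1 ≠ ∅ → Sat φ₁ .AE pr.1) ∧ (pr.2 ≠ ∅ → Sat φ₂ .AE pr.2)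
  | .ex p ς φ, .EA, 𝔄 => Sat φ .EA (extSpec ς 𝔄 p)
  | .ex p ς φ, .AE, 𝔄 => Sat φ .EA (extSpec ς (hdual 𝔄) p)
  | .all p ς φ, .AE, 𝔄 => Sat φ .AE (extSpec ς 𝔄 p)
  | .all p ς φ, .EA, 𝔄 => Sat φ .AE (extSpec ς (hdual 𝔄) p)

set_option linter.unusedSectionVars false

section Aux

variable {Y : Type*} [Nonempty Y]

lemma exists_choice {𝔄 : Set (Set Y)} {P : Set Y → Y → Prop}
    (h : ∀ W ∈ 𝔄, ∃ x ∈ W, P W x) :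
    ∃ ϑ : Set Y → Y, IsChoice 𝔄 ϑ ∧ ∀ W ∈ 𝔄, P W (ϑ W) := by
  classical
  choose f hf1 hf2 using h
  refine ⟨fun W => if hW : W ∈ 𝔄 then f W hW else Classical.arbitrary Y, ?_, ?_⟩
  · intro W hW; simp only [dif_pos hW]; exact hf1 W hW
  · intro W hW; simp only [dif_pos hW]; exact hf2 W hW

lemma hle_total {𝔄₁ 𝔄₂ : Set (Set Y)} (h : hle 𝔄₁ 𝔄₂) :
    ∃ f : Set Y → Set Y, ∀ W ∈ 𝔄₁, f W ∈ 𝔄₂ ∧ f W ⊆ W := by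
  classical
  choose f hf1 hf2 using h
  exact ⟨fun W => if hW : W ∈ 𝔄₁ then f W hW else ∅,
    fun W hW => by simp only [dif_pos hW]; exact ⟨hf1 W hW, hf2 W hW⟩⟩

lemma hdual_antitone {𝔄₁ 𝔄₂ : Set (Set Y)} (h : hle 𝔄₁ 𝔄₂) :
    hle (hdual 𝔄₂) (hdual 𝔄₁) := by
  rintro Z ⟨ϑ, hϑ, rfl⟩
  obtain ⟨f, hf⟩ := hle_total h
  refine ⟨(fun W => ϑ (f W)) '' 𝔄₁, ⟨_, ?_, rfl⟩, ?_⟩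
  · intro W hW
    exact (hf W hW).2 (hϑ _ (hf W hW).1)
  · rintro x ⟨W, hW, rfl⟩
    exact ⟨f W, (hf W hW).1, rfl⟩

lemma hle_hdual_hdual (𝔄 : Set (Set Y)) : hle 𝔄 (hdual (hdual 𝔄)) := by
  intro W hW
  have key : ∀ Z ∈ hdual 𝔄, ∃ x ∈ Z, x ∈ W := by
    rintro Z ⟨ϑ, hϑ, rfl⟩
    exact ⟨ϑ W, ⟨W, hW, rfl⟩, hϑ W hW⟩
  obtain ⟨Θ, hΘ, hΘ2⟩ := exists_choice key
  exact ⟨Θ '' hdual 𝔄, ⟨Θ, hΘ, rfl⟩, by rintro x ⟨Z, hZ, rfl⟩; exact hΘ2 Z hZ⟩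

lemma hdual_hdual_hle (𝔄 : Set (Set Y)) : hle (hdual (hdual 𝔄)) 𝔄 := by
  rintro Z ⟨Θ, hΘ, rfl⟩
  by_contra hcon
  push_neg at hcon
  have h : ∀ W ∈ 𝔄, ∃ x ∈ W, x ∉ Θ '' hdual 𝔄 := by
    intro W hW
    obtain ⟨x, hx1, hx2⟩ := Set.not_subset.mp (hcon W hW)
    exact ⟨x, hx1, hx2⟩
  obtain ⟨ϑ, hϑ, hϑ2⟩ := exists_choice h
  have hY : ϑ '' 𝔄 ∈ hdual 𝔄 := ⟨ϑ, hϑ, rfl⟩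
  obtain ⟨W, hW, hEq⟩ := hΘ _ hY
  exact hϑ2 W hW (hEq ▸ ⟨ϑ '' 𝔄, hY, rfl⟩)

lemma hdual_hyp {𝔄 : Set (Set Y)} (h : IsHyp 𝔄) : IsHyp (hdual 𝔄) := by
  obtain ⟨hne, hempty⟩ := h
  constructor
  · have key : ∀ W ∈ 𝔄, ∃ x ∈ W, True := by
      intro W hW
      obtain ⟨x, hx⟩ := Set.nonempty_iff_ne_empty.mpr (fun hc => hempty (hc ▸ hW))
      exact ⟨x, hx, trivial⟩
    obtain ⟨ϑ, hϑ, -⟩ := exists_choice key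
    exact Set.nonempty_iff_ne_empty.mp ⟨ϑ '' 𝔄, ϑ, hϑ, rfl⟩
  · rintro ⟨ϑ, hϑ, hEq⟩
    exact hne (Set.image_eq_empty.mp hEq.symm)

end Aux

lemma extSpec_mono {ς : Spec AP} {p : AP} {𝔄₁ 𝔄₂ : Set (Set (Asg AP))}
    (h : hle 𝔄₁ 𝔄₂) : hle (extSpec ς 𝔄₁ p) (extSpec ς 𝔄₂ p) := by
  rintro Z ⟨W, hW, F, hF, rfl⟩
  obtain ⟨W₂, hW₂, hsub⟩ := h W hW
  exact ⟨extSet W₂ F p, ⟨W₂, hW₂, F, hF, rfl⟩, Set.image_mono hsub⟩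

lemma sat_mono (φ : Formula AP) :
    ∀ 𝔄₁ 𝔄₂ : Set (Set (Asg AP)), hle 𝔄₁ 𝔄₂ →
      (Sat φ .EA 𝔄₁ → Sat φ .EA 𝔄₂) ∧ (Sat φ .AE 𝔄₂ → Sat φ .AE 𝔄₁) := by
  induction φ with
  | atom Ψ =>
    intro 𝔄₁ 𝔄₂ h
    constructor
    · rintro ⟨W, hW, hsub⟩
      obtain ⟨W₂, hW₂, h2⟩ := h W hW
      exact ⟨W₂, hW₂, h2.trans hsub⟩
    · intro hAE W hW
      obtain ⟨W₂, hW₂, h2⟩ := h W hW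
      obtain ⟨x, hx⟩ := Set.nonempty_iff_ne_empty.mpr (hAE W₂ hW₂)
      exact Set.nonempty_iff_ne_empty.mp ⟨x, h2 hx.1, hx.2⟩
  | neg φ ih =>
    intro 𝔄₁ 𝔄₂ h
    exact ⟨fun h1 h2 => h1 ((ih _ _ h).2 h2), fun h1 h2 => h1 ((ih _ _ h).1 h2)⟩
  | conj φ₁ φ₂ ih₁ ih₂ =>
    have key : ∀ 𝔄₁ 𝔄₂ : Set (Set (Asg AP)), hle 𝔄₁ 𝔄₂ →
        Sat (.conj φ₁ φ₂) .EA 𝔄₁ → Sat (.conj φ₁ φ₂) .EA 𝔄₂ := by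
      intro 𝔄₁ 𝔄₂ h hsat pr hpr
      obtain ⟨f, hf⟩ := hle_total h
      classical
      have hpar : ({W ∈ 𝔄₁ | f W ∈ pr.1}, {W ∈ 𝔄₁ | f W ∉ pr.1}) ∈ par 𝔄₁ := by
        constructor
        · ext W
          constructor
          · rintro (⟨hW, -⟩ | ⟨hW, -⟩) <;> exact hW
          · intro hW
            by_cases hc : f W ∈ pr.1
            · exact Or.inl ⟨hW, hc⟩
            · exact Or.inr ⟨hW, hc⟩
        · rw [Set.disjoint_left]
          rintro W ⟨-, h1⟩ ⟨-, h2⟩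
          exact h2 h1
      rcases hsat _ hpar with ⟨hne, hs⟩ | ⟨hne, hs⟩
      · left
        obtain ⟨W, hW, hmem⟩ := Set.nonempty_iff_ne_empty.mpr hne
        refine ⟨Set.nonempty_iff_ne_empty.mp ⟨f W, hmem⟩, ?_⟩
        refine (ih₁ _ pr.1 ?_).1 hs
        rintro W₁ ⟨hW₁, hm⟩
        exact ⟨f W₁, hm, (hf W₁ hW₁).2⟩
      · right
        obtain ⟨W, hW, hmem⟩ := Set.nonempty_iff_ne_empty.mpr hne
        have hm2 : ∀ W₁ ∈ 𝔄₁, f W₁ ∉ pr.1 → f W₁ ∈ pr.2 := by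
          intro W₁ hW₁ hn
          have : f W₁ ∈ pr.1 ∪ pr.2 := hpr.1.symm ▸ (hf W₁ hW₁).1
          rcases this with hc | hc
          · exact absurd hc hn
          · exact hc
        refine ⟨Set.nonempty_iff_ne_empty.mp ⟨f W, hm2 W hW hmem⟩, ?_⟩
        refine (ih₂ _ pr.2 ?_).1 hs
        rintro W₁ ⟨hW₁, hm⟩
        exact ⟨f W₁, hm2 W₁ hW₁ hm, (hf W₁ hW₁).2⟩
    intro 𝔄₁ 𝔄₂ h
    exact ⟨key _ _ h, key _ _ (hdual_antitone h)⟩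
  | disj φ₁ φ₂ ih₁ ih₂ =>
    have key : ∀ 𝔄₁ 𝔄₂ : Set (Set (Asg AP)), hle 𝔄₁ 𝔄₂ →
        Sat (.disj φ₁ φ₂) .AE 𝔄₂ → Sat (.disj φ₁ φ₂) .AE 𝔄₁ := by
      intro 𝔄₁ 𝔄₂ h hsat
      obtain ⟨pr, hpr, h1, h2⟩ := hsat
      obtain ⟨f, hf⟩ := hle_total h
      classical
      refine ⟨({W ∈ 𝔄₁ | f W ∈ pr.1}, {W ∈ 𝔄₁ | f W ∉ pr.1}), ⟨?_, ?_⟩, ?_, ?_⟩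
      · ext W
        constructor
        · rintro (⟨hW, -⟩ | ⟨hW, -⟩) <;> exact hW
        · intro hW
          by_cases hc : f W ∈ pr.1
          · exact Or.inl ⟨hW, hc⟩
          · exact Or.inr ⟨hW, hc⟩
      · rw [Set.disjoint_left]
        rintro W ⟨-, ha⟩ ⟨-, hb⟩
        exact hb ha
      · intro hne
        obtain ⟨W, hW, hmem⟩ := Set.nonempty_iff_ne_empty.mpr hne
        refine (ih₁ _ pr.1 ?_).2 (h1 (Set.nonempty_iff_ne_empty.mp ⟨f W, hmem⟩))
        rintro W₁ ⟨hW₁, hm⟩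
        exact ⟨f W₁, hm, (hf W₁ hW₁).2⟩
      · intro hne
        obtain ⟨W, hW, hmem⟩ := Set.nonempty_iff_ne_empty.mpr hne
        have hm2 : ∀ W₁ ∈ 𝔄₁, f W₁ ∉ pr.1 → f W₁ ∈ pr.2 := by
          intro W₁ hW₁ hn
          have : f W₁ ∈ pr.1 ∪ pr.2 := hpr.1.symm ▸ (hf W₁ hW₁).1
          rcases this with hc | hc
          · exact absurd hc hn
          · exact hc
        refine (ih₂ _ pr.2 ?_).2 (h2 (Set.nonempty_iff_ne_empty.mp ⟨f W, hm2 W hW hmem⟩))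
        rintro W₁ ⟨hW₁, hm⟩
        exact ⟨f W₁, hm2 W₁ hW₁ hm, (hf W₁ hW₁).2⟩
    intro 𝔄₁ 𝔄₂ h
    exact ⟨key _ _ (hdual_antitone h), key _ _ h⟩
  | ex p ς φ ih =>
    intro 𝔄₁ 𝔄₂ h
    constructor
    · exact (ih _ _ (extSpec_mono h)).1
    · exact (ih _ _ (extSpec_mono (hdual_antitone h))).1
  | all p ς φ ih =>
    intro 𝔄₁ 𝔄₂ h
    constructor
    · exact (ih _ _ (extSpec_mono (hdual_antitone h))).2
    · exact (ih _ _ (extSpec_mono h)).2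

lemma sat_dual (φ : Formula AP) :
    ∀ 𝔄 : Set (Set (Asg AP)),
      (Sat φ .EA 𝔄 ↔ Sat φ .AE (hdual 𝔄)) ∧ (Sat φ .AE 𝔄 ↔ Sat φ .EA (hdual 𝔄)) := by
  induction φ with
  | atom Ψ =>
    intro 𝔄
    constructor
    · constructor
      · rintro ⟨W, hW, hsub⟩ Z ⟨ϑ, hϑ, rfl⟩
        exact Set.nonempty_iff_ne_empty.mp ⟨ϑ W, ⟨W, hW, rfl⟩, hsub (hϑ W hW)⟩
      · intro hAE
        by_contra hcon
        have hcon' : ¬ ∃ W ∈ 𝔄, W ⊆ Ψ := hcon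
        push_neg at hcon'
        have h : ∀ W ∈ 𝔄, ∃ x ∈ W, x ∉ Ψ := by
          intro W hW
          obtain ⟨x, hx1, hx2⟩ := Set.not_subset.mp (hcon' W hW)
          exact ⟨x, hx1, hx2⟩
        obtain ⟨ϑ, hϑ, hϑ2⟩ := exists_choice h
        refine hAE (ϑ '' 𝔄) ⟨ϑ, hϑ, rfl⟩ ?_
        ext x
        simp only [Set.mem_inter_iff, Set.mem_empty_iff_false, iff_false, not_and]
        rintro ⟨W, hW, rfl⟩
        exact hϑ2 W hW
    · constructor
      · intro hAE
        have h : ∀ W ∈ 𝔄, ∃ x ∈ W, x ∈ Ψ := by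
          intro W hW
          obtain ⟨x, hx⟩ := Set.nonempty_iff_ne_empty.mpr (hAE W hW)
          exact ⟨x, hx.1, hx.2⟩
        obtain ⟨ϑ, hϑ, hϑ2⟩ := exists_choice h
        exact ⟨ϑ '' 𝔄, ⟨ϑ, hϑ, rfl⟩, by rintro x ⟨W, hW, rfl⟩; exact hϑ2 W hW⟩
      · rintro ⟨Z, ⟨ϑ, hϑ, rfl⟩, hsub⟩ W hW
        exact Set.nonempty_iff_ne_empty.mp ⟨ϑ W, hϑ W hW, hsub ⟨W, hW, rfl⟩⟩
  | neg φ ih =>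
    intro 𝔄
    exact ⟨not_congr (ih 𝔄).2, not_congr (ih 𝔄).1⟩
  | conj φ₁ φ₂ ih₁ ih₂ =>
    intro 𝔄
    refine ⟨?_, Iff.rfl⟩
    show Sat (.conj φ₁ φ₂) .EA 𝔄 ↔ Sat (.conj φ₁ φ₂) .EA (hdual (hdual 𝔄))
    exact ⟨(sat_mono _ _ _ (hle_hdual_hdual 𝔄)).1,
      (sat_mono _ _ _ (hdual_hdual_hle 𝔄)).1⟩
  | disj φ₁ φ₂ ih₁ ih₂ =>
    intro 𝔄
    refine ⟨Iff.rfl, ?_⟩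
    show Sat (.disj φ₁ φ₂) .AE 𝔄 ↔ Sat (.disj φ₁ φ₂) .AE (hdual (hdual 𝔄))
    exact ⟨(sat_mono _ _ _ (hdual_hdual_hle 𝔄)).2,
      (sat_mono _ _ _ (hle_hdual_hdual 𝔄)).2⟩
  | ex p ς φ ih =>
    intro 𝔄
    refine ⟨?_, Iff.rfl⟩
    show Sat φ .EA (extSpec ς 𝔄 p) ↔ Sat φ .EA (extSpec ς (hdual (hdual 𝔄)) p)
    exact ⟨(sat_mono _ _ _ (extSpec_mono (hle_hdual_hdual 𝔄))).1,
      (sat_mono _ _ _ (extSpec_mono (hdual_hdual_hle 𝔄))).1⟩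
  | all p ς φ ih =>
    intro 𝔄
    refine ⟨Iff.rfl, ?_⟩
    show Sat φ .AE (extSpec ς 𝔄 p) ↔ Sat φ .AE (extSpec ς (hdual (hdual 𝔄)) p)
    exact ⟨(sat_mono _ _ _ (extSpec_mono (hdual_hdual_hle 𝔄))).2,
      (sat_mono _ _ _ (extSpec_mono (hle_hdual_hdual 𝔄))).2⟩

/-- Corollary 2 (Interpretation Invariance). -/
theorem interpretation_invariance (φ ψ : Formula AP) :
    ((∃ 𝔄 : Set (Set (Asg AP)), IsHyp 𝔄 ∧ Sat φ .EA 𝔄) ↔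
      (∃ 𝔅 : Set (Set (Asg AP)), IsHyp 𝔅 ∧ Sat φ .AE 𝔅)) ∧
    ((∀ 𝔄 : Set (Set (Asg AP)), IsHyp 𝔄 → Sat φ .EA 𝔄 → Sat ψ .EA 𝔄) ↔
      (∀ 𝔄 : Set (Set (Asg AP)), IsHyp 𝔄 → Sat φ .AE 𝔄 → Sat ψ .AE 𝔄)) ∧
    ((∀ 𝔄 : Set (Set (Asg AP)), IsHyp 𝔄 → (Sat φ .EA 𝔄 ↔ Sat ψ .EA 𝔄)) ↔
      (∀ 𝔄 : Set (Set (Asg AP)), IsHyp 𝔄 → (Sat φ .AE 𝔄 ↔ Sat ψ .AE 𝔄))) := by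
  refine ⟨⟨?_, ?_⟩, ⟨?_, ?_⟩, ⟨?_, ?_⟩⟩
  · rintro ⟨𝔄, h𝔄, hsat⟩
    exact ⟨hdual 𝔄, hdual_hyp h𝔄, ((sat_dual φ 𝔄).1).mp hsat⟩
  · rintro ⟨𝔅, h𝔅, hsat⟩
    exact ⟨hdual 𝔅, hdual_hyp h𝔅, ((sat_dual φ 𝔅).2).mp hsat⟩
  · intro h 𝔄 h𝔄 hsat
    exact ((sat_dual ψ 𝔄).2).mpr
      (h (hdual 𝔄) (hdual_hyp h𝔄) (((sat_dual φ 𝔄).2).mp hsat))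
  · intro h 𝔄 h𝔄 hsat
    exact ((sat_dual ψ 𝔄).1).mpr
      (h (hdual 𝔄) (hdual_hyp h𝔄) (((sat_dual φ 𝔄).1).mp hsat))
  · intro h 𝔄 h𝔄
    calc Sat φ .AE 𝔄 ↔ Sat φ .EA (hdual 𝔄) := (sat_dual φ 𝔄).2
      _ ↔ Sat ψ .EA (hdual 𝔄) := h (hdual 𝔄) (hdual_hyp h𝔄)
      _ ↔ Sat ψ .AE 𝔄 := ((sat_dual ψ 𝔄).2).symm
  · intro h 𝔄 h𝔄
    calc Sat φ .EA 𝔄 ↔ Sat φ .AE (hdual 𝔄) := (sat_dual φ 𝔄).1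
      _ ↔ Sat ψ .AE (hdual 𝔄) := h (hdual 𝔄) (hdual_hyp h𝔄)
      _ ↔ Sat ψ .EA 𝔄 := ((sat_dual ψ 𝔄).1).symm

end GFG
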